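/- arXiv:math/0112067 — 2 statements merged into one kernel-verified Lean document; each statement's English description precedes it below -/
import Mathlib

section
/- Let p ≥ 2. Suppose (A_{j1}, ..., A_{jp}) for j = 1, ..., m are m distinct weak set compositions into p parts such that for every k ∈ {1,...,p} and all distinct i, j ∈ {1,...,m}, either A_{ik} = A_{jk}, or both A_{ik} ∩ ⋃_{l≠k} A_{jl} ≠ ∅ and A_{jk} ∩ ⋃_{l≠k} A_{il} ≠ ∅. Let n ≥ max over j of (|A_{j1}| + ··· + |A_{jp}|). Then the sum over j = 1, ..., m of 1/( (|A_{j1}|+···+|A_{jp}|)! / (|A_{j1}|!···|A_{jp}|!) ) is at most 1, and consequently m is at most the largest p-multinomial coefficient for n. The bound on m is attained for every n and p. -/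
set_option linter.unusedSectionVars false

namespace MGST
open Finset

variable {p : ℕ}

/-- prefix sums of `a` -/
def csum (a : Fin p → ℕ) (t : ℕ) : ℕ := ∑ l ∈ Finset.univ.filter (fun l : Fin p => (l : ℕ) < t), a l

lemma csum_zero (a : Fin p → ℕ) : csum a 0 = 0 := by simp [csum]

lemma csum_mono (a : Fin p → ℕ) {t t' : ℕ} (h : t ≤ t') : csum a t ≤ csum a t' := by
  apply Finset.sum_le_sum_of_subset
  intro l hl
  simp only [mem_filter, mem_univ, true_and] at hl ⊢
  omega

lemma csum_succ (a : Fin p → ℕ) (t : Fin p) : csum a ((t : ℕ) + 1) = csum a t + a t := by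
  unfold csum
  have : Finset.univ.filter (fun l : Fin p => (l : ℕ) < (t : ℕ) + 1)
      = insert t (Finset.univ.filter (fun l : Fin p => (l : ℕ) < (t : ℕ))) := by
    ext l
    simp only [mem_insert, mem_filter, mem_univ, true_and, Fin.ext_iff]
    omega
  rw [this, Finset.sum_insert (by simp), add_comm]

lemma csum_ge (a : Fin p → ℕ) {t : ℕ} (hpt : p ≤ t) : csum a t = ∑ k, a k := by
  unfold csum
  apply Finset.sum_congr _ (fun _ _ => rfl)
  ext l; simp only [mem_filter, mem_univ, true_and, iff_true]
  exact lt_of_lt_of_le l.2 hpt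

lemma csum_le_sum (a : Fin p → ℕ) (t : ℕ) : csum a t ≤ ∑ k, a k :=
  Finset.sum_le_sum_of_subset (Finset.filter_subset _ _)

lemma csum_add_le (a : Fin p → ℕ) (t : Fin p) : csum a t + a t ≤ ∑ k, a k := by
  rw [← csum_succ]; exact csum_le_sum a _

variable (hp : 0 < p)

/-- the "standard" function with fiber sizes `a`. -/
noncomputable def stdFun (a : Fin p → ℕ) (r : ℕ) : Fin p :=
  (Finset.univ.filter (fun k : Fin p => csum a k ≤ r)).max'
    ⟨⟨0, hp⟩, by simp [csum_zero]⟩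

lemma stdFun_mono (a : Fin p → ℕ) {r r' : ℕ} (h : r ≤ r') : stdFun hp a r ≤ stdFun hp a r' := by
  apply Finset.max'_subset
  intro k hk
  simp only [mem_filter, mem_univ, true_and] at hk ⊢
  omega

lemma stdFun_eq_iff (a : Fin p → ℕ) {r : ℕ} {k : Fin p} (hr : r < ∑ k, a k) :
    stdFun hp a r = k ↔ csum a k ≤ r ∧ r < csum a ((k : ℕ) + 1) := by
  constructor
  · rintro rfl
    constructor
    · have := Finset.max'_mem (Finset.univ.filter (fun k : Fin p => csum a k ≤ r))
        ⟨⟨0, hp⟩, by simp [csum_zero]⟩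
      simpa [stdFun] using this
    · set K := stdFun hp a r with hK
      by_contra hcon
      push_neg at hcon
      -- csum (K+1) ≤ r ; find element k' > K in filter
      have hKp : (K : ℕ) + 1 < p := by
        rcases Nat.lt_or_ge ((K : ℕ) + 1) p with h | h
        · exact h
        · exfalso; rw [csum_ge a h] at hcon; omega
      have hmem : (⟨(K : ℕ) + 1, hKp⟩ : Fin p) ∈
          Finset.univ.filter (fun k : Fin p => csum a k ≤ r) := by
        simp only [mem_filter, mem_univ, true_and]
        exact hcon
      have h2 : (⟨(K : ℕ) + 1, hKp⟩ : Fin p) ≤ stdFun hp a r := by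
        unfold stdFun; exact Finset.le_max' _ _ hmem
      rw [← hK, Fin.le_def] at h2
      simp only at h2
      omega
  · rintro ⟨h1, h2⟩
    apply le_antisymm
    · apply Finset.max'_le
      intro k' hk'
      simp only [mem_filter, mem_univ, true_and] at hk'
      by_contra hcon
      push_neg at hcon
      have : csum a ((k : ℕ) + 1) ≤ csum a (k' : ℕ) := csum_mono a hcon
      omega
    · apply Finset.le_max'
      simp only [mem_filter, mem_univ, true_and]
      exact h1

lemma card_stdFun_fiber (a : Fin p → ℕ) (k : Fin p) :
    (Finset.univ.filter fun r : Fin (∑ j, a j) => stdFun hp a r = k).card = a k := by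
  have hsub : ∀ r : Fin (∑ j, a j),
      stdFun hp a r = k ↔ csum a k ≤ (r : ℕ) ∧ (r : ℕ) < csum a k + a k := by
    intro r
    rw [stdFun_eq_iff hp a r.2, csum_succ]
  rw [show (Finset.univ.filter fun r : Fin (∑ j, a j) => stdFun hp a r = k).card
      = ((Finset.Ico (csum a k) (csum a k + a k))).card from ?_, Nat.card_Ico]
  · omega
  · refine Finset.card_bij (fun r _ => (r : ℕ)) ?_ ?_ ?_
    · intro r hr
      simp only [mem_filter, mem_univ, true_and] at hr
      rw [hsub r] at hr
      simp only [Finset.mem_Ico]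
      exact hr
    · intro r _ r' _ h
      exact Fin.ext h
    · intro x hx
      simp only [Finset.mem_Ico] at hx
      have hxs : x < ∑ j, a j := lt_of_lt_of_le hx.2 (csum_add_le a k)
      refine ⟨⟨x, hxs⟩, ?_, rfl⟩
      simp only [mem_filter, mem_univ, true_and]
      exact (hsub ⟨x, hxs⟩).2 hx


section Kappa

variable {N : ℕ} (a : Fin p → ℕ) (T : Finset (Fin N)) (hT : T.card = ∑ k, a k)

/-- The canonical "sorted" coloring of positions with color classes of sizes `a` located in `T`,
and the extra color `Fin.last p` outside `T`. -/
noncomputable def kappa : Fin N → Fin (p + 1) := fun i =>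
  if h : i ∈ T then Fin.castSucc (stdFun hp a ((T.orderIsoOfFin hT).symm ⟨i, h⟩)) else Fin.last p

lemma kappa_mem {i : Fin N} (h : i ∈ T) :
    kappa hp a T hT i = Fin.castSucc (stdFun hp a ((T.orderIsoOfFin hT).symm ⟨i, h⟩)) :=
  dif_pos h

lemma kappa_notMem {i : Fin N} (h : i ∉ T) : kappa hp a T hT i = Fin.last p := dif_neg h

lemma kappa_ne_last {i : Fin N} : kappa hp a T hT i ≠ Fin.last p ↔ i ∈ T := by
  constructor
  · intro h
    by_contra hc
    exact h (kappa_notMem hp a T hT hc)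
  · intro h
    rw [kappa_mem hp a T hT h]
    exact Fin.ne_last_of_lt (Fin.castSucc_lt_last _)

lemma kappa_sorted {i j : Fin N} (hij : i < j) (hi : kappa hp a T hT i ≠ Fin.last p)
    (hj : kappa hp a T hT j ≠ Fin.last p) : kappa hp a T hT i ≤ kappa hp a T hT j := by
  rw [kappa_ne_last] at hi hj
  rw [kappa_mem hp a T hT hi, kappa_mem hp a T hT hj, Fin.castSucc_le_castSucc_iff]
  apply stdFun_mono
  have h1 : (⟨i, hi⟩ : {x // x ∈ T}) ≤ ⟨j, hj⟩ := le_of_lt hij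
  have := (T.orderIsoOfFin hT).symm.monotone h1
  exact this

lemma kappa_fiber_castSucc (k : Fin p) :
    (Finset.univ.filter fun i : Fin N => kappa hp a T hT i = Fin.castSucc k).card = a k := by
  rw [← card_stdFun_fiber hp a k]
  refine (Finset.card_bij (fun r _ => ((T.orderIsoOfFin hT) r : Fin N)) ?_ ?_ ?_).symm
  · intro r hr
    simp only [mem_filter, mem_univ, true_and] at hr ⊢
    have hmem : ((T.orderIsoOfFin hT) r : Fin N) ∈ T := ((T.orderIsoOfFin hT) r).2
    rw [kappa_mem hp a T hT hmem]
    congr 1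
    rw [show (⟨((T.orderIsoOfFin hT) r : Fin N), hmem⟩ : {x // x ∈ T}) = (T.orderIsoOfFin hT) r
      from Subtype.ext rfl]
    rw [OrderIso.symm_apply_apply]
    exact hr
  · intro r _ r' _ h
    have := Subtype.ext h
    exact (T.orderIsoOfFin hT).injective this
  · intro i hi
    simp only [mem_filter, mem_univ, true_and] at hi
    have hmem : i ∈ T := by
      rw [← kappa_ne_last hp a T hT]
      rw [hi]
      exact Fin.ne_last_of_lt (Fin.castSucc_lt_last _)
    refine ⟨(T.orderIsoOfFin hT).symm ⟨i, hmem⟩, ?_, ?_⟩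
    · simp only [mem_filter, mem_univ, true_and]
      rw [kappa_mem hp a T hT hmem] at hi
      exact Fin.castSucc_injective _ hi
    · show (((T.orderIsoOfFin hT) ((T.orderIsoOfFin hT).symm ⟨i, hmem⟩) : {x // x ∈ T}) : Fin N) = i
      rw [OrderIso.apply_symm_apply]

lemma kappa_fiber_last :
    (Finset.univ.filter fun i : Fin N => kappa hp a T hT i = Fin.last p).card
      = N - ∑ k, a k := by
  have : (Finset.univ.filter fun i : Fin N => kappa hp a T hT i = Fin.last p) = Tᶜ := by
    ext i
    simp only [mem_filter, mem_univ, true_and, Finset.mem_compl]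
    rw [← kappa_ne_last hp a T hT, not_not]
  rw [this, Finset.card_compl, hT, Fintype.card_fin]

end Kappa


section Count

/-- Counting equivalences transporting one function to another: the number of equivalences
`σ` with `g ∘ σ = f` equals the product of factorials of fiber cardinalities, provided
fibers match in size. -/
lemma nat_card_filter {α : Type*} [Fintype α] (P : α → Prop) [DecidablePred P] :
    Nat.card {x // P x} = (Finset.univ.filter P).card := by
  rw [Nat.card_eq_fintype_card, Fintype.card_subtype]

lemma card_transport {β β' ι : Type*} [Fintype β] [Fintype β'] [DecidableEq β] [DecidableEq β']
    [Fintype ι] [DecidableEq ι] (f : β → ι) (g : β' → ι)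
    (h : ∀ i, Nat.card {x // f x = i} = Nat.card {y // g y = i}) :
    Nat.card {σ : β ≃ β' // ∀ x, g (σ x) = f x}
      = ∏ i, (Nat.card {x // f x = i}).factorial := by
  simp only [Nat.card_eq_fintype_card] at h ⊢
  obtain ⟨e0, he0⟩ : ∃ e : β ≃ β', ∀ x, g (e x) = f x :=
    ⟨Equiv.ofFiberEquiv (fun i => Fintype.equivOfCardEq (h i)), Equiv.ofFiberEquiv_map _⟩
  have key : {σ : β ≃ β' // ∀ x, g (σ x) = f x} ≃ {τ : Equiv.Perm β // f ∘ τ = f} := by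
    refine ⟨fun σ => ⟨σ.1.trans e0.symm, funext fun x => ?_⟩,
      fun τ => ⟨τ.1.trans e0, fun x => ?_⟩, fun σ => ?_, fun τ => ?_⟩
    · show f (e0.symm (σ.1 x)) = f x
      rw [← he0 (e0.symm (σ.1 x)), Equiv.apply_symm_apply, σ.2]
    · show g (e0 (τ.1 x)) = f x
      rw [he0]
      exact congrFun τ.2 x
    · ext x
      simp
    · ext x
      simp
  rw [Fintype.card_congr key, DomMulAct.stabilizer_card]

variable {γ : Type} [Fintype γ] [DecidableEq γ] (B : Fin p → Finset γ)

/-- color of an element: the part it belongs to (or `Fin.last p` for no part). -/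
noncomputable def colf : γ → Fin (p + 1) := fun x =>
  if h : ∃ k, x ∈ B k then (h.choose).castSucc else Fin.last p

variable (hdisj : ∀ k l, k ≠ l → Disjoint (B k) (B l))
include hdisj

lemma colf_eq_castSucc {x : γ} {k : Fin p} : colf B x = k.castSucc ↔ x ∈ B k := by
  unfold colf
  constructor
  · intro h
    split at h
    · next hex =>
      have := hex.choose_spec
      rwa [Fin.castSucc_inj.mp h] at this
    · exact absurd h.symm (Fin.ne_last_of_lt (Fin.castSucc_lt_last _))
  · intro h
    have hex : ∃ k, x ∈ B k := ⟨k, h⟩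
    rw [dif_pos hex, Fin.castSucc_inj]
    by_contra hne
    exact (Finset.disjoint_left.mp (hdisj _ _ hne)) hex.choose_spec h

lemma colf_fiber_castSucc (k : Fin p) :
    (Finset.univ.filter fun x => colf B x = k.castSucc) = B k := by
  ext x
  simp only [mem_filter, mem_univ, true_and]
  exact colf_eq_castSucc B hdisj

lemma colf_fiber_last :
    (Finset.univ.filter fun x => colf B x = Fin.last p)
      = (Finset.univ.biUnion B)ᶜ := by
  ext x
  rw [mem_filter, Finset.mem_compl]
  simp only [mem_univ, true_and]
  constructor
  · intro h hx
    rw [Finset.mem_biUnion] at hx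
    obtain ⟨k, -, hk⟩ := hx
    rw [← colf_eq_castSucc B hdisj] at hk
    rw [h] at hk
    exact (Fin.ne_last_of_lt (Fin.castSucc_lt_last k)) hk.symm
  · intro h
    unfold colf
    rw [dif_neg]
    rintro ⟨k, hk⟩
    exact h (Finset.mem_biUnion.mpr ⟨k, mem_univ k, hk⟩)

lemma sum_card_eq : (Finset.univ.biUnion B).card = ∑ k, (B k).card :=
  Finset.card_biUnion (fun k _ l _ h => hdisj k l h)

lemma sum_card_le : ∑ k, (B k).card ≤ Fintype.card γ := by
  rw [← sum_card_eq B hdisj]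
  exact Finset.card_le_univ _

end Count


section Select

variable {γ : Type} [Fintype γ] [DecidableEq γ]

/-- `σ` arranges the composition `B` in blocks. -/
def Select {q : ℕ} (B : Fin p → Finset γ) (σ : γ → Fin q) : Prop :=
  ∀ k l : Fin p, ∀ x y : γ, k < l → x ∈ B k → y ∈ B l → σ x < σ y

instance selectDec {q : ℕ} (B : Fin p → Finset γ) :
    DecidablePred (fun σ : γ ≃ Fin q => Select B σ) := fun σ => by
  unfold Select; infer_instance

lemma select_count (hp : 0 < p) (B : Fin p → Finset γ)
    (hdisj : ∀ k l, k ≠ l → Disjoint (B k) (B l)) :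
    (Fintype.card γ).factorial * ∏ k, ((B k).card).factorial ≤
    (Finset.univ.filter fun σ : γ ≃ Fin (Fintype.card γ) => Select B σ).card
      * (∑ k, (B k).card).factorial := by
  set N := Fintype.card γ with hN
  set a : Fin p → ℕ := fun k => (B k).card with ha
  set s := ∑ k, a k with hs
  have hsN : s ≤ N := sum_card_le B hdisj
  have hpow : ∀ T ∈ Finset.powersetCard s (univ : Finset (Fin N)), T.card = ∑ k, a k :=
    fun T hT => (Finset.mem_powersetCard.mp hT).2
  -- the classes
  set F : ∀ T : Finset (Fin N), T.card = ∑ k, a k → Finset (γ ≃ Fin N) :=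
    fun T hT => univ.filter (fun σ => ∀ x, kappa hp a T hT (σ x) = colf B x) with hF
  -- each class consists of selecting equivalences
  have c1 : ∀ (T) (hT : T.card = ∑ k, a k), F T hT ⊆ univ.filter fun σ => Select B σ := by
    intro T hT σ hσ
    rw [hF, mem_filter] at hσ
    rw [mem_filter]
    refine ⟨mem_univ _, ?_⟩
    intro k l x y hkl hx hy
    have hcx : colf B x = k.castSucc := (colf_eq_castSucc B hdisj).mpr hx
    have hcy : colf B y = l.castSucc := (colf_eq_castSucc B hdisj).mpr hy
    have hkx := hσ.2 x
    have hky := hσ.2 y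
    rw [hcx] at hkx
    rw [hcy] at hky
    rcases lt_trichotomy (σ x) (σ y) with h | h | h
    · exact h
    · exfalso
      have : x = y := σ.injective h
      subst this
      exact (Finset.disjoint_left.mp (hdisj k l hkl.ne)) hx hy
    · exfalso
      have := kappa_sorted hp a T hT h
        (by rw [hky]; exact Fin.ne_last_of_lt (Fin.castSucc_lt_last _))
        (by rw [hkx]; exact Fin.ne_last_of_lt (Fin.castSucc_lt_last _))
      rw [hkx, hky, Fin.castSucc_le_castSucc_iff] at this
      exact absurd this (not_le.mpr hkl)
  -- each class has the size (∏ a k !) * (N - s)!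
  have c2 : ∀ (T) (hT : T.card = ∑ k, a k),
      (F T hT).card = (∏ k, (a k).factorial) * (N - s).factorial := by
    intro T hT
    rw [hF]
    rw [← nat_card_filter, card_transport (colf B) (kappa hp a T hT) ?_]
    · rw [Fin.prod_univ_castSucc]
      congr 1
      · apply Finset.prod_congr rfl
        intro k _
        congr 1
        rw [nat_card_filter, colf_fiber_castSucc B hdisj]
      · congr 1
        rw [nat_card_filter, colf_fiber_last B hdisj, Finset.card_compl,
          sum_card_eq B hdisj]
    · intro c
      induction c using Fin.lastCases with
      | last =>
        rw [nat_card_filter, nat_card_filter, colf_fiber_last B hdisj,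
          kappa_fiber_last hp a T hT, Finset.card_compl, sum_card_eq B hdisj]
      | cast k =>
        rw [nat_card_filter, nat_card_filter, colf_fiber_castSucc B hdisj,
          kappa_fiber_castSucc hp a T hT k]
  -- the union over position sets
  set D : Finset (γ ≃ Fin N) :=
    (Finset.powersetCard s (univ : Finset (Fin N))).attach.biUnion
      (fun T => F T.1 (hpow T.1 T.2)) with hD
  have hdisjD : ∀ T ∈ (Finset.powersetCard s (univ : Finset (Fin N))).attach,
      ∀ T' ∈ (Finset.powersetCard s (univ : Finset (Fin N))).attach, T ≠ T' →
      Disjoint (F T.1 (hpow T.1 T.2)) (F T'.1 (hpow T'.1 T'.2)) := by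
    intro T _ T' _ hne
    rw [Finset.disjoint_left]
    intro σ h1 h2
    rw [hF, mem_filter] at h1 h2
    apply hne
    apply Subtype.ext
    ext i
    rw [← kappa_ne_last hp a T.1 (hpow T.1 T.2), ← kappa_ne_last hp a T'.1 (hpow T'.1 T'.2)]
    have e1 := h1.2 (σ.symm i)
    have e2 := h2.2 (σ.symm i)
    rw [Equiv.apply_symm_apply] at e1 e2
    rw [e1, e2]
  have hcardD : D.card = (Nat.choose N s) * ((∏ k, (a k).factorial) * (N - s).factorial) := by
    rw [hD, Finset.card_biUnion hdisjD]
    rw [Finset.sum_congr rfl (fun T _ => c2 T.1 (hpow T.1 T.2))]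
    rw [Finset.sum_const, Finset.card_attach, Finset.card_powersetCard, Finset.card_univ,
      Fintype.card_fin, smul_eq_mul]
  have hsub : D ⊆ univ.filter fun σ => Select B σ := by
    rw [hD]
    intro σ hσ
    rw [Finset.mem_biUnion] at hσ
    obtain ⟨T, _, hT⟩ := hσ
    exact c1 T.1 (hpow T.1 T.2) hT
  calc N.factorial * ∏ k, (a k).factorial
      = (Nat.choose N s * s.factorial * (N - s).factorial) * ∏ k, (a k).factorial := by
        rw [Nat.choose_mul_factorial_mul_factorial hsN]
    _ = (Nat.choose N s * ((∏ k, (a k).factorial) * (N - s).factorial)) * s.factorial := by ring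
    _ = D.card * s.factorial := by rw [hcardD]
    _ ≤ _ := Nat.mul_le_mul_right _ (Finset.card_le_card hsub)

end Select


section Core

variable {γ : Type} [Fintype γ] [DecidableEq γ]

theorem core {m : ℕ} (hp : 0 < p) (B : Fin m → Fin p → Finset γ)
    (hinj : Function.Injective B)
    (hdisj : ∀ j, ∀ k l, k ≠ l → Disjoint (B j k) (B j l))
    (hcross : ∀ (k : Fin p) (i j : Fin m), i ≠ j → B i k = B j k ∨
      ((∃ x ∈ B i k, ∃ l, l ≠ k ∧ x ∈ B j l) ∧ (∃ y ∈ B j k, ∃ l, l ≠ k ∧ y ∈ B i l))) :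
    ∑ j, (∏ k, (((B j k).card.factorial : ℝ))) / (∑ k, (B j k).card).factorial ≤ 1 := by
  set N := Fintype.card γ with hN
  set Sel : Fin m → Finset (γ ≃ Fin N) :=
    fun j => univ.filter (fun σ : γ ≃ Fin N => Select (B j) σ) with hSel
  have key : ∀ j, N.factorial * ∏ k, (B j k).card.factorial
      ≤ (Sel j).card * (∑ k, (B j k).card).factorial :=
    fun j => select_count hp (B j) (hdisj j)
  have hdisjSel : ∀ i ∈ (univ : Finset (Fin m)), ∀ j ∈ (univ : Finset (Fin m)), i ≠ j →
      Disjoint (Sel i) (Sel j) := by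
    intro i _ j _ hne
    rw [Finset.disjoint_left]
    intro σ h1 h2
    rw [hSel, mem_filter] at h1 h2
    have hsi := h1.2
    have hsj := h2.2
    -- find the least coordinate where they differ
    have hKne : (univ.filter fun k => B i k ≠ B j k).Nonempty := by
      rw [Finset.filter_nonempty_iff]
      by_contra hc
      push_neg at hc
      exact hne (hinj (funext fun k => hc k (mem_univ k)))
    set k0 := (univ.filter fun k => B i k ≠ B j k).min' hKne with hk0
    have hk0mem := Finset.min'_mem _ hKne
    rw [← hk0] at hk0mem
    rw [mem_filter] at hk0mem
    have hmin : ∀ l, l < k0 → B i l = B j l := by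
      intro l hl
      by_contra hc
      have : k0 ≤ l := Finset.min'_le _ _ (by rw [mem_filter]; exact ⟨mem_univ _, hc⟩)
      exact absurd hl (not_lt.mpr this)
    rcases hcross k0 i j hne with heq | ⟨⟨x, hx, l1, hl1, hx2⟩, ⟨y, hy, l2, hl2, hy2⟩⟩
    · exact hk0mem.2 heq
    · have hk0l1 : k0 < l1 := by
        rcases lt_trichotomy l1 k0 with h | h | h
        · exfalso
          rw [← hmin l1 h] at hx2
          exact (Finset.disjoint_left.mp (hdisj i l1 k0 (ne_of_lt h))) hx2 hx
        · exact absurd h hl1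
        · exact h
      have hk0l2 : k0 < l2 := by
        rcases lt_trichotomy l2 k0 with h | h | h
        · exfalso
          rw [hmin l2 h] at hy2
          exact (Finset.disjoint_left.mp (hdisj j l2 k0 (ne_of_lt h))) hy2 hy
        · exact absurd h hl2
        · exact h
      have o1 : σ x < σ y := hsi k0 l2 x y hk0l2 hx hy2
      have o2 : σ y < σ x := hsj k0 l1 y x hk0l1 hy hx2
      exact absurd o2 (not_lt.mpr o1.le)
  have hsum : ∑ j, (Sel j).card ≤ N.factorial := by
    rw [← Finset.card_biUnion hdisjSel]
    calc ((univ : Finset (Fin m)).biUnion Sel).card ≤ Fintype.card (γ ≃ Fin N) :=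
          Finset.card_le_univ _
      _ = N.factorial := by rw [Fintype.card_equiv (Fintype.equivFin γ)]
  have hterm : ∀ j, (∏ k, (((B j k).card.factorial : ℝ))) / (∑ k, (B j k).card).factorial
      ≤ ((Sel j).card : ℝ) / N.factorial := by
    intro j
    rw [div_le_div_iff₀ (by positivity) (by positivity)]
    calc (∏ k, (((B j k).card.factorial : ℝ))) * N.factorial
        = (N.factorial * ∏ k, (B j k).card.factorial : ℕ) := by push_cast; ring
      _ ≤ ((Sel j).card * (∑ k, (B j k).card).factorial : ℕ) := by exact_mod_cast key j
      _ = ((Sel j).card : ℝ) * (∑ k, (B j k).card).factorial := by push_cast; ring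
  calc ∑ j, (∏ k, (((B j k).card.factorial : ℝ))) / (∑ k, (B j k).card).factorial
      ≤ ∑ j, ((Sel j).card : ℝ) / N.factorial := Finset.sum_le_sum fun j _ => hterm j
    _ = (∑ j, ((Sel j).card : ℕ) : ℝ) / N.factorial := by push_cast; rw [Finset.sum_div]
    _ ≤ (N.factorial : ℝ) / N.factorial := by
        apply div_le_div_of_nonneg_right ?_ (by positivity)
        exact_mod_cast hsum
    _ = 1 := div_self (by positivity)

end Core


section CountFun

lemma card_filter_comp {n : ℕ} (f g : Fin n → Fin p) (σ : Equiv.Perm (Fin n))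
    (hfg : ∀ x, f (σ x) = g x) (k : Fin p) :
    (univ.filter fun i => g i = k).card = (univ.filter fun i => f i = k).card := by
  refine Finset.card_bij (fun i _ => σ i) ?_ ?_ ?_
  · intro i hi
    rw [mem_filter] at hi ⊢
    exact ⟨mem_univ _, by rw [hfg i]; exact hi.2⟩
  · intro i _ i' _ h
    exact σ.injective h
  · intro i hi
    rw [mem_filter] at hi
    refine ⟨σ.symm i, ?_, by simp⟩
    rw [mem_filter]
    refine ⟨mem_univ _, ?_⟩
    rw [← hfg (σ.symm i)]
    simpa using hi.2

theorem WF_card (hp : 0 < p) (a : Fin p → ℕ) :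
    (univ.filter (fun g : Fin (∑ k, a k) → Fin p =>
      ∀ k, (univ.filter fun i => g i = k).card = a k)).card = Nat.multinomial univ a := by
  set n := ∑ k, a k with hn
  set f0 : Fin n → Fin p := fun i => stdFun hp a i with hf0
  have hf0card : ∀ k, (univ.filter fun i => f0 i = k).card = a k := card_stdFun_fiber hp a
  set WF : Finset (Fin n → Fin p) :=
    univ.filter (fun g => ∀ k, (univ.filter fun i => g i = k).card = a k) with hWF
  have hmem : ∀ σ ∈ (univ : Finset (Fin n ≃ Fin n)), f0 ∘ σ ∈ WF := by
    intro σ _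
    rw [hWF, mem_filter]
    refine ⟨mem_univ _, fun k => ?_⟩
    rw [card_filter_comp f0 (f0 ∘ σ) σ (fun x => rfl) k, hf0card k]
  have master : n.factorial = WF.card * ∏ k, (a k).factorial := by
    have h1 : (univ : Finset (Fin n ≃ Fin n)).card
        = ∑ g ∈ WF, ((univ : Finset (Fin n ≃ Fin n)).filter
            fun σ : Fin n ≃ Fin n => f0 ∘ σ = g).card :=
      Finset.card_eq_sum_card_fiberwise hmem
    have h2 : ∀ g ∈ WF, ((univ : Finset (Fin n ≃ Fin n)).filter
        fun σ : Fin n ≃ Fin n => f0 ∘ σ = g).card = ∏ k, (a k).factorial := by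
      intro g hg
      rw [hWF, mem_filter] at hg
      have hfib : ∀ i, Nat.card {x // g x = i} = Nat.card {y // f0 y = i} := by
        intro i
        rw [nat_card_filter, nat_card_filter, hg.2 i, hf0card i]
      have e1 : ((univ : Finset (Fin n ≃ Fin n)).filter
          fun σ : Fin n ≃ Fin n => f0 ∘ σ = g).card
          = Nat.card {σ : Fin n ≃ Fin n // ∀ x, f0 (σ x) = g x} := by
        rw [← nat_card_filter]
        exact Nat.card_congr (Equiv.subtypeEquivRight (fun σ => funext_iff))
      refine e1.trans ((card_transport g f0 hfib).trans ?_)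
      apply Finset.prod_congr rfl
      intro k _
      rw [nat_card_filter, hg.2 k]
    calc n.factorial = Fintype.card (Fin n ≃ Fin n) := by
          rw [Fintype.card_equiv (Equiv.refl _), Fintype.card_fin]
      _ = (univ : Finset (Fin n ≃ Fin n)).card := Finset.card_univ.symm
      _ = ∑ g ∈ WF, ((univ : Finset (Fin n ≃ Fin n)).filter
            fun σ : Fin n ≃ Fin n => f0 ∘ σ = g).card := h1
      _ = ∑ _g ∈ WF, ∏ k, (a k).factorial := Finset.sum_congr rfl h2
      _ = WF.card * ∏ k, (a k).factorial := by rw [Finset.sum_const, smul_eq_mul]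
  have hspec := Nat.multinomial_spec univ a
  apply Nat.eq_of_mul_eq_mul_right (show 0 < ∏ k, (a k).factorial from
    Finset.prod_pos fun k _ => Nat.factorial_pos _)
  rw [← master, mul_comm (Nat.multinomial univ a) _, hspec, hn]

end CountFun


section Pad

lemma multinomial_le_sup (hp : 0 < p) {n : ℕ} (a : Fin p → ℕ) (hs : ∑ k, a k ≤ n) :
    Nat.multinomial univ a
      ≤ (Finset.Nat.antidiagonalTuple p n).sup (fun b => Nat.multinomial univ b) := by
  classical
  set k0 : Fin p := ⟨0, hp⟩
  set s := ∑ k, a k with hsdef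
  set t := n - s with ht
  have hn : n = s + t := by omega
  set b : Fin p → ℕ := Function.update a k0 (a k0 + t) with hb
  have hak0' : a k0 ≤ s := Finset.single_le_sum (fun _ _ => Nat.zero_le _) (mem_univ k0)
  have hsumb : ∑ k, b k = n := by
    rw [hb, Finset.sum_update_of_mem (mem_univ k0)]
    have h1 : ∑ k ∈ univ.erase k0, a k = s - a k0 := by
      rw [hsdef, ← Finset.add_sum_erase _ _ (mem_univ k0)]
      omega
    rw [Finset.sdiff_singleton_eq_erase, h1]
    omega
  have hmemb : b ∈ Finset.Nat.antidiagonalTuple p n := by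
    rw [Finset.Nat.mem_antidiagonalTuple]
    exact hsumb
  refine le_trans ?_ (Finset.le_sup hmemb)
  -- now prove multinomial a ≤ multinomial b
  have hprodb : ∏ k, (b k).factorial = (a k0 + t).factorial * ∏ k ∈ univ.erase k0, (a k).factorial := by
    rw [hb, ← Finset.mul_prod_erase _ _ (mem_univ k0), Function.update_self]
    congr 1
    apply Finset.prod_congr rfl
    intro k hk
    rw [Function.update_of_ne (Finset.ne_of_mem_erase hk)]
  have hproda : ∏ k, (a k).factorial = (a k0).factorial * ∏ k ∈ univ.erase k0, (a k).factorial :=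
    (Finset.mul_prod_erase _ _ (mem_univ k0)).symm
  have hspa := Nat.multinomial_spec univ a
  have hspb := Nat.multinomial_spec univ b
  rw [hsumb] at hspb
  rw [← hsdef] at hspa
  have hak0 : a k0 ≤ s := Finset.single_le_sum (fun _ _ => Nat.zero_le _) (mem_univ k0)
  -- key factorial inequality : s! * (a k0 + t)! ≤ n! * (a k0)!
  have hkey : s.factorial * (a k0 + t).factorial ≤ n.factorial * (a k0).factorial := by
    have h1 : (a k0 + t).factorial = (a k0 + t).choose t * t.factorial * (a k0).factorial := by
      have := Nat.choose_mul_factorial_mul_factorial (show t ≤ a k0 + t by omega)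
      rw [show a k0 + t - t = a k0 by omega] at this
      rw [← this]
    have h2 : n.factorial = (s + t).choose t * t.factorial * s.factorial := by
      have := Nat.choose_mul_factorial_mul_factorial (show t ≤ s + t by omega)
      rw [show s + t - t = s by omega] at this
      rw [hn]
      exact this.symm
    rw [h1, h2]
    have := Nat.choose_le_choose t (show a k0 + t ≤ s + t by omega)
    calc s.factorial * ((a k0 + t).choose t * t.factorial * (a k0).factorial)
        = ((a k0 + t).choose t * t.factorial) * s.factorial * (a k0).factorial := by ring
      _ ≤ ((s + t).choose t * t.factorial) * s.factorial * (a k0).factorial := by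
          apply Nat.mul_le_mul_right
          apply Nat.mul_le_mul_right
          exact Nat.mul_le_mul_right _ this
      _ = (s + t).choose t * t.factorial * s.factorial * (a k0).factorial := by ring
  -- conclude
  refine Nat.le_of_mul_le_mul_right ?_ (show 0 < (∏ k, (b k).factorial) * (a k0).factorial from
    Nat.mul_pos (Finset.prod_pos fun k _ => Nat.factorial_pos _) (Nat.factorial_pos _))
  calc Nat.multinomial univ a * ((∏ k, (b k).factorial) * (a k0).factorial)
        = (Nat.multinomial univ a * ∏ k, (a k).factorial) * (a k0 + t).factorial := by
          rw [hprodb, hproda]; ring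
      _ = s.factorial * (a k0 + t).factorial := by rw [mul_comm (Nat.multinomial univ a) _, hspa]
      _ ≤ n.factorial * (a k0).factorial := hkey
      _ = Nat.multinomial univ b * ((∏ k, (b k).factorial) * (a k0).factorial) := by
          rw [← hspb]; ring

lemma one_le_sup (hp : 0 < p) (n : ℕ) :
    1 ≤ (Finset.Nat.antidiagonalTuple p n).sup (fun b => Nat.multinomial univ b) := by
  have := multinomial_le_sup hp (n := n) (fun _ => (0:ℕ)) (by simp)
  exact le_trans (Nat.multinomial_pos _ _) this

end Pad


section Part1

variable {α : Type} [DecidableEq α]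

theorem part1 (hp : 0 < p) (n m : ℕ) (A : Fin m → Fin p → Finset α)
    (hinj : Function.Injective A)
    (hdisj : ∀ j, ∀ k l : Fin p, k ≠ l → Disjoint (A j k) (A j l))
    (hcross : ∀ k : Fin p, ∀ i j : Fin m, i ≠ j → (A i k = A j k ∨
      ((A i k ∩ (Finset.univ.erase k).biUnion (A j)).Nonempty ∧
       (A j k ∩ (Finset.univ.erase k).biUnion (A i)).Nonempty)))
    (hsum : ∀ j, ∑ k, (A j k).card ≤ n) :
    (∑ j, (1 : ℝ) /
        (((∑ k, (A j k).card).factorial : ℝ) / ∏ k, ((A j k).card.factorial : ℝ)) ≤ 1) ∧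
    m ≤ (Finset.Nat.antidiagonalTuple p n).sup (fun a => Nat.multinomial Finset.univ a) := by
  classical
  set U : Finset α := Finset.univ.biUnion (fun j : Fin m => Finset.univ.biUnion (A j)) with hU
  have hmemU : ∀ j k, ∀ x ∈ A j k, x ∈ U := by
    intro j k x hx
    rw [hU]
    exact Finset.mem_biUnion.mpr ⟨j, mem_univ _, Finset.mem_biUnion.mpr ⟨k, mem_univ _, hx⟩⟩
  set B : Fin m → Fin p → Finset {x // x ∈ U} :=
    fun j k => (A j k).subtype (· ∈ U) with hB
  have hmemB : ∀ j k (x : {x // x ∈ U}), x ∈ B j k ↔ (x : α) ∈ A j k := by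
    intro j k x
    rw [hB]
    simp [Finset.mem_subtype]
  have hBA : ∀ j k, (B j k).map (Function.Embedding.subtype _) = A j k := by
    intro j k
    rw [hB, Finset.subtype_map]
    exact Finset.filter_true_of_mem (hmemU j k)
  have hcard : ∀ j k, (B j k).card = (A j k).card := by
    intro j k
    rw [← hBA j k, Finset.card_map]
  have hBinj : Function.Injective B := by
    intro i j h
    apply hinj
    funext k
    rw [← hBA i k, ← hBA j k, h]
  have hBdisj : ∀ j, ∀ k l, k ≠ l → Disjoint (B j k) (B j l) := by
    intro j k l hkl
    rw [Finset.disjoint_left]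
    intro x hx hx'
    rw [hmemB] at hx hx'
    exact (Finset.disjoint_left.mp (hdisj j k l hkl)) hx hx'
  have hBcross : ∀ (k : Fin p) (i j : Fin m), i ≠ j → B i k = B j k ∨
      ((∃ x ∈ B i k, ∃ l, l ≠ k ∧ x ∈ B j l) ∧ (∃ y ∈ B j k, ∃ l, l ≠ k ∧ y ∈ B i l)) := by
    intro k i j hne
    rcases hcross k i j hne with heq | ⟨h1, h2⟩
    · left
      ext x
      rw [hmemB, hmemB, heq]
    · right
      constructor
      · obtain ⟨x, hx⟩ := h1
        rw [Finset.mem_inter, Finset.mem_biUnion] at hx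
        obtain ⟨hx1, l, hl, hxl⟩ := hx
        exact ⟨⟨x, hmemU i k x hx1⟩, (hmemB i k _).mpr hx1,
          l, (Finset.mem_erase.mp hl).1, (hmemB j l _).mpr hxl⟩
      · obtain ⟨y, hy⟩ := h2
        rw [Finset.mem_inter, Finset.mem_biUnion] at hy
        obtain ⟨hy1, l, hl, hyl⟩ := hy
        exact ⟨⟨y, hmemU j k y hy1⟩, (hmemB j k _).mpr hy1,
          l, (Finset.mem_erase.mp hl).1, (hmemB i l _).mpr hyl⟩
  have hcore := core hp B hBinj hBdisj hBcross
  have hterm : ∀ j, (1 : ℝ) /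
      (((∑ k, (A j k).card).factorial : ℝ) / ∏ k, ((A j k).card.factorial : ℝ))
      = (∏ k, (((B j k).card.factorial : ℝ))) / (∑ k, (B j k).card).factorial := by
    intro j
    rw [one_div_div]
    have e1 : ∑ k, (B j k).card = ∑ k, (A j k).card :=
      Finset.sum_congr rfl (fun k _ => hcard j k)
    have e2 : ∏ k, (((B j k).card.factorial : ℝ)) = ∏ k, (((A j k).card.factorial : ℝ)) :=
      Finset.prod_congr rfl (fun k _ => by rw [hcard])
    rw [e1, e2]
  have hfirst : ∑ j, (1 : ℝ) /
      (((∑ k, (A j k).card).factorial : ℝ) / ∏ k, ((A j k).card.factorial : ℝ)) ≤ 1 := by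
    rw [Finset.sum_congr rfl (fun j _ => hterm j)]
    exact hcore
  refine ⟨hfirst, ?_⟩
  -- second claim
  set M := (Finset.Nat.antidiagonalTuple p n).sup (fun a => Nat.multinomial Finset.univ a) with hM
  have hM1 : 1 ≤ M := one_le_sup hp n
  have hMpos : (0 : ℝ) < M := by exact_mod_cast hM1
  have htm : ∀ j : Fin m, (1 : ℝ) / M ≤ (1 : ℝ) /
      (((∑ k, (A j k).card).factorial : ℝ) / ∏ k, ((A j k).card.factorial : ℝ)) := by
    intro j
    set mj := Nat.multinomial univ (fun k => (A j k).card) with hmj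
    have hsp := Nat.multinomial_spec univ (fun k => (A j k).card)
    have heq : (((∑ k, (A j k).card).factorial : ℝ) / ∏ k, ((A j k).card.factorial : ℝ))
        = (mj : ℝ) := by
      rw [eq_comm, eq_div_iff (by positivity)]
      rw [hmj]
      exact_mod_cast congrArg (Nat.cast : ℕ → ℝ) ((mul_comm _ _).trans hsp)
    rw [heq]
    apply one_div_le_one_div_of_le
    · exact_mod_cast Nat.multinomial_pos _ _
    · exact_mod_cast multinomial_le_sup hp (fun k => (A j k).card) (hsum j)
  have hlow : (m : ℝ) * ((1:ℝ) / M) ≤ 1 := by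
    calc (m : ℝ) * ((1:ℝ) / M)
        = ∑ _j : Fin m, ((1:ℝ) / M) := by
          rw [Finset.sum_const, Finset.card_univ, Fintype.card_fin, nsmul_eq_mul]
      _ ≤ ∑ j, (1 : ℝ) /
          (((∑ k, (A j k).card).factorial : ℝ) / ∏ k, ((A j k).card.factorial : ℝ)) :=
          Finset.sum_le_sum (fun j _ => htm j)
      _ ≤ 1 := hfirst
  rw [mul_one_div, div_le_one hMpos] at hlow
  exact_mod_cast hlow

end Part1


section Part2

lemma WF_card' (hp : 0 < p) (a : Fin p → ℕ) {n : ℕ} (h : ∑ k, a k = n) :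
    (univ.filter (fun g : Fin n → Fin p =>
      ∀ k, (univ.filter fun i => g i = k).card = a k)).card = Nat.multinomial univ a := by
  subst h
  exact WF_card hp a

theorem part2 (hp : 0 < p) (n : ℕ) :
    ∃ (m : ℕ) (A : Fin m → Fin p → Finset ℕ),
      Function.Injective A ∧
      (∀ j, ∀ k l : Fin p, k ≠ l → Disjoint (A j k) (A j l)) ∧
      (∀ k : Fin p, ∀ i j : Fin m, i ≠ j → (A i k = A j k ∨
        ((A i k ∩ (Finset.univ.erase k).biUnion (A j)).Nonempty ∧
         (A j k ∩ (Finset.univ.erase k).biUnion (A i)).Nonempty))) ∧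
      (∀ j, ∑ k, (A j k).card ≤ n) ∧
      m = (Finset.Nat.antidiagonalTuple p n).sup (fun a => Nat.multinomial Finset.univ a) := by
  classical
  -- a maximizing composition of n
  have hne : (Finset.Nat.antidiagonalTuple p n).Nonempty := by
    refine ⟨fun i => if i = ⟨0, hp⟩ then n else 0, ?_⟩
    rw [Finset.Nat.mem_antidiagonalTuple]
    simp
  obtain ⟨astar, hastar_mem, hastar⟩ :=
    Finset.exists_mem_eq_sup (Finset.Nat.antidiagonalTuple p n) hne
      (fun b => Nat.multinomial univ b)
  have hsumstar : ∑ k, astar k = n := Finset.Nat.mem_antidiagonalTuple.mp hastar_mem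
  set WF : Finset (Fin n → Fin p) :=
    univ.filter (fun g => ∀ k, (univ.filter fun i => g i = k).card = astar k) with hWF
  refine ⟨WF.card, ?_⟩
  set G : Fin WF.card → Fin n → Fin p := fun j => (WF.equivFin.symm j : Fin n → Fin p) with hG
  have hGmem : ∀ j k, (univ.filter fun i => G j i = k).card = astar k := by
    intro j k
    exact (mem_filter.mp (WF.equivFin.symm j).2).2 k
  have hGinj : Function.Injective G := by
    intro i j h
    have : WF.equivFin.symm i = WF.equivFin.symm j := Subtype.ext h
    exact WF.equivFin.symm.injective this
  set A : Fin WF.card → Fin p → Finset ℕ :=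
    fun j k => (univ.filter fun i => G j i = k).image Fin.val with hA
  have hcardA : ∀ j k, (A j k).card = astar k := by
    intro j k
    rw [hA, Finset.card_image_of_injective _ Fin.val_injective, hGmem]
  have hmemA : ∀ j k (x : ℕ), x ∈ A j k ↔ ∃ i : Fin n, G j i = k ∧ (i : ℕ) = x := by
    intro j k x
    rw [hA]
    simp only [Finset.mem_image, mem_filter, mem_univ, true_and]
  refine ⟨A, ?_, ?_, ?_, ?_, ?_⟩
  · -- injective
    intro i j h
    apply hGinj
    funext x
    have hx : (x : ℕ) ∈ A i (G i x) := (hmemA i (G i x) x).mpr ⟨x, rfl, rfl⟩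
    rw [h] at hx
    obtain ⟨i', h1, h2⟩ := (hmemA j (G i x) x).mp hx
    rw [show i' = x from Fin.ext h2] at h1
    exact h1.symm
  · -- disjoint
    intro j k l hkl
    rw [Finset.disjoint_left]
    intro x hx hx'
    obtain ⟨i, h1, h2⟩ := (hmemA j k x).mp hx
    obtain ⟨i', h1', h2'⟩ := (hmemA j l x).mp hx'
    rw [show i' = i from Fin.ext (h2'.trans h2.symm)] at h1'
    exact hkl (h1.symm.trans h1')
  · -- cross
    intro k i j hne
    rcases eq_or_ne (univ.filter fun x => G i x = k) (univ.filter fun x => G j x = k)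
      with heq | hfne
    · left
      rw [hA]
      simp only
      rw [heq]
    · right
      have key : ∀ i' j' : Fin WF.card,
          (univ.filter fun x => G i' x = k) ≠ (univ.filter fun x => G j' x = k) →
          (A i' k ∩ (Finset.univ.erase k).biUnion (A j')).Nonempty := by
        intro i' j' hfne'
        have hns : ¬ (univ.filter fun x => G i' x = k) ⊆ (univ.filter fun x => G j' x = k) := by
          intro hsub
          exact hfne' (Finset.eq_of_subset_of_card_le hsub (by rw [hGmem, hGmem]))
        obtain ⟨x, hx1, hx2⟩ := Finset.not_subset.mp hns
        rw [mem_filter] at hx1 hx2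
        have hGi : G i' x = k := hx1.2
        have hGj : G j' x ≠ k := fun hc => hx2 ⟨mem_univ _, hc⟩
        refine ⟨(x : ℕ), Finset.mem_inter.mpr ⟨?_, ?_⟩⟩
        · exact (hmemA i' k x).mpr ⟨x, hGi, rfl⟩
        · refine Finset.mem_biUnion.mpr ⟨G j' x, Finset.mem_erase.mpr ⟨hGj, mem_univ _⟩, ?_⟩
          exact (hmemA j' (G j' x) x).mpr ⟨x, rfl, rfl⟩
      exact ⟨key i j hfne, key j i (Ne.symm hfne)⟩
  · -- sums
    intro j
    calc ∑ k, (A j k).card = ∑ k, astar k := Finset.sum_congr rfl (fun k _ => hcardA j k)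
      _ = n := hsumstar
      _ ≤ n := le_refl n
  · -- cardinality
    rw [hWF, WF_card' hp astar hsumstar, hastar]

end Part2

end MGST

/-- **Meshalkin–Griggs–Stahl–Trotter corollary.** Let `p ≥ 2`. Suppose
`(A_{j1}, …, A_{jp})`, `j = 1, …, m`, are distinct weak set compositions into `p` parts
such that for every `k ∈ [p]` and all distinct `i, j ∈ [m]` either `A_{ik} = A_{jk}` or
`A_{ik} ∩ ⋃_{l≠k} A_{jl} ≠ ∅ ≠ A_{jk} ∩ ⋃_{l≠k} A_{il}`, and let
`n ≥ max_j (|A_{j1}| + ⋯ + |A_{jp}|)`. Then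
`∑_j 1/((|A_{j1}|+⋯+|A_{jp}|)!/(|A_{j1}|! ⋯ |A_{jp}|!)) ≤ 1`, and consequently `m` is at
most the largest `p`-multinomial coefficient for `n`; the bound on `m` is attained for
every `n` and `p`. -/
theorem meshalkin_gst (p : ℕ) (hp : 2 ≤ p) :
    (∀ (α : Type) [DecidableEq α], ∀ (n m : ℕ) (A : Fin m → Fin p → Finset α),
      Function.Injective A →
      (∀ j, ∀ k l : Fin p, k ≠ l → Disjoint (A j k) (A j l)) →
      (∀ k : Fin p, ∀ i j : Fin m, i ≠ j → (A i k = A j k ∨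
        ((A i k ∩ (Finset.univ.erase k).biUnion (A j)).Nonempty ∧
         (A j k ∩ (Finset.univ.erase k).biUnion (A i)).Nonempty))) →
      (∀ j, ∑ k, (A j k).card ≤ n) →
      (∑ j, (1 : ℝ) /
          (((∑ k, (A j k).card).factorial : ℝ) / ∏ k, ((A j k).card.factorial : ℝ)) ≤ 1) ∧
      m ≤ (Finset.Nat.antidiagonalTuple p n).sup (fun a => Nat.multinomial Finset.univ a)) ∧
    (∀ n : ℕ, ∃ (m : ℕ) (A : Fin m → Fin p → Finset ℕ),
      Function.Injective A ∧
      (∀ j, ∀ k l : Fin p, k ≠ l → Disjoint (A j k) (A j l)) ∧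
      (∀ k : Fin p, ∀ i j : Fin m, i ≠ j → (A i k = A j k ∨
        ((A i k ∩ (Finset.univ.erase k).biUnion (A j)).Nonempty ∧
         (A j k ∩ (Finset.univ.erase k).biUnion (A i)).Nonempty))) ∧
      (∀ j, ∑ k, (A j k).card ≤ n) ∧
      m = (Finset.Nat.antidiagonalTuple p n).sup (fun a => Nat.multinomial Finset.univ a)) := by
  have hp0 : 0 < p := by omega
  constructor
  · intro α _ n m A hinj hdisj hcross hsum
    exact MGST.part1 hp0 n m A hinj hdisj hcross hsum
  · intro n
    exact MGST.part2 hp0 n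
end

section
/- Let M_1, ..., M_N be real numbers with M_1 ≥ M_2 ≥ ··· ≥ M_N ≥ 0, let R be an integer with 1 ≤ R ≤ N and M_R > 0, and let q_1, ..., q_N ∈ [0,1] satisfy q_1 + ··· + q_N ≤ R. Let R' be the number of indices k with M_k > M_R and R'' the largest index k with M_k = M_R. Then q_1 M_1 + ··· + q_N M_N = M_1 + ··· + M_R if and only if q_k = 1 for every k with M_k > M_R, q_k = 0 for every k with M_k < M_R, and q_{R'+1} + ··· + q_{R''} = R − R'. -/
/-- **Sharpness of the Harper–Klain–Rota lemma.** Let `M_1 ≥ ⋯ ≥ M_N ≥ 0` be reals,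
`1 ≤ R ≤ N` with `M_R > 0`, and `q_1, …, q_N ∈ [0,1]` with `q_1 + ⋯ + q_N ≤ R`. Let `R'` be
the number of indices `k` with `M_k > M_R` and `R''` the largest index `k` with
`M_k = M_R`. Then `q_1 M_1 + ⋯ + q_N M_N = M_1 + ⋯ + M_R` if and only if `q_k = 1`
whenever `M_k > M_R`, `q_k = 0` whenever `M_k < M_R`, and
`q_{R'+1} + ⋯ + q_{R''} = R - R'`. (Indices run over `1, …, N`.) -/
theorem hkr_sharp (N R : ℕ) (hR1 : 1 ≤ R) (hRN : R ≤ N) (M q : ℕ → ℝ)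
    (hmono : ∀ i j, 1 ≤ i → i ≤ j → j ≤ N → M j ≤ M i)
    (hnonneg : ∀ i, 1 ≤ i → i ≤ N → 0 ≤ M i)
    (hMR : 0 < M R)
    (hq : ∀ i, 1 ≤ i → i ≤ N → q i ∈ Set.Icc (0 : ℝ) 1)
    (hqsum : ∑ i ∈ Finset.Icc 1 N, q i ≤ (R : ℝ))
    (R' R'' : ℕ)
    (hR' : R' = ((Finset.Icc 1 N).filter fun k => M R < M k).card)
    (hR''mem : R'' ∈ Finset.Icc 1 N) (hR''eq : M R'' = M R)
    (hR''max : ∀ k ∈ Finset.Icc 1 N, M k = M R → k ≤ R'') :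
    (∑ i ∈ Finset.Icc 1 N, q i * M i = ∑ i ∈ Finset.Icc 1 R, M i) ↔
      ((∀ k ∈ Finset.Icc 1 N, M R < M k → q k = 1) ∧
       (∀ k ∈ Finset.Icc 1 N, M k < M R → q k = 0) ∧
       ∑ k ∈ Finset.Icc (R' + 1) R'', q k = (R : ℝ) - (R' : ℝ)) := by
  obtain ⟨h1R'', hR''N⟩ := Finset.mem_Icc.mp hR''mem
  -- the filter set equals Icc 1 R'
  have hSsub : ((Finset.Icc 1 N).filter fun k => M R < M k) ⊆ Finset.Icc 1 R' := by
    intro k hk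
    obtain ⟨hk1, hlt⟩ := Finset.mem_filter.mp hk
    obtain ⟨hk1', hkN⟩ := Finset.mem_Icc.mp hk1
    have hsub : Finset.Icc 1 k ⊆ (Finset.Icc 1 N).filter fun k => M R < M k := by
      intro j hj
      obtain ⟨hj1, hjk⟩ := Finset.mem_Icc.mp hj
      exact Finset.mem_filter.mpr ⟨Finset.mem_Icc.mpr ⟨hj1, hjk.trans hkN⟩,
        lt_of_lt_of_le hlt (hmono j k hj1 hjk hkN)⟩
    have hcard : k ≤ ((Finset.Icc 1 N).filter fun k => M R < M k).card := by
      simpa using Finset.card_le_card hsub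
    exact Finset.mem_Icc.mpr ⟨hk1', hR' ▸ hcard⟩
  have hSeq : ((Finset.Icc 1 N).filter fun k => M R < M k) = Finset.Icc 1 R' := by
    apply Finset.eq_of_subset_of_card_le hSsub
    simp [hR']
  have hkR' : ∀ k, 1 ≤ k → k ≤ N → (M R < M k ↔ k ≤ R') := by
    intro k hk1 hkN
    constructor
    · intro h
      have hmem : k ∈ Finset.Icc 1 R' :=
        hSeq ▸ Finset.mem_filter.mpr ⟨Finset.mem_Icc.mpr ⟨hk1, hkN⟩, h⟩
      exact (Finset.mem_Icc.mp hmem).2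
    · intro h
      have hmem : k ∈ (Finset.Icc 1 N).filter fun k => M R < M k := by
        rw [hSeq]; exact Finset.mem_Icc.mpr ⟨hk1, h⟩
      exact (Finset.mem_filter.mp hmem).2
  have hR'R : R' < R := by
    by_contra h
    exact lt_irrefl _ ((hkR' R hR1 hRN).mpr (le_of_not_gt h))
  have hRR'' : R ≤ R'' := hR''max R (Finset.mem_Icc.mpr ⟨hR1, hRN⟩) rfl
  have hR'R'' : R' ≤ R'' := (hR'R.le.trans hRR'')
  have hR'N : R' ≤ N := hR'R.le.trans hRN
  have hgeR'' : ∀ k, 1 ≤ k → k ≤ R'' → M R ≤ M k := by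
    intro k hk1 hk2
    rw [← hR''eq]; exact hmono k R'' hk1 hk2 hR''N
  have hmid : ∀ k, R' < k → k ≤ R'' → M k = M R := by
    intro k hk1 hk2
    have hk0 : 1 ≤ k := Nat.one_le_iff_ne_zero.mpr (by omega)
    have hkN : k ≤ N := hk2.trans hR''N
    have h2 : ¬ M R < M k := fun h => absurd ((hkR' k hk0 hkN).mp h) (by omega)
    exact le_antisymm (not_lt.mp h2) (hgeR'' k hk0 hk2)
  have hhigh : ∀ k, R'' < k → k ≤ N → M k < M R := by
    intro k hk1 hkN
    have hle : M k ≤ M R := by rw [← hR''eq]; exact hmono R'' k h1R'' hk1.le hkN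
    refine lt_of_le_of_ne hle (fun h => ?_)
    exact absurd (hR''max k (Finset.mem_Icc.mpr ⟨by omega, hkN⟩) h) (by omega)
  -- convert to Ioc form
  have e1 : Finset.Icc 1 N = Finset.Ioc 0 N := Finset.Icc_add_one_left_eq_Ioc 0 N
  have e2 : Finset.Icc 1 R = Finset.Ioc 0 R := Finset.Icc_add_one_left_eq_Ioc 0 R
  have e3 : Finset.Icc (R' + 1) R'' = Finset.Ioc R' R'' := Finset.Icc_add_one_left_eq_Ioc R' R''
  rw [e1] at hqsum
  rw [e1, e2, e3]
  -- splitting lemmas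
  have hsplit_qM : ∑ i ∈ Finset.Ioc 0 N, q i * M i
      = (∑ i ∈ Finset.Ioc 0 R', q i * M i) + (∑ i ∈ Finset.Ioc R' R'', q i * M i)
        + ∑ i ∈ Finset.Ioc R'' N, q i * M i := by
    rw [Finset.sum_Ioc_consecutive _ (Nat.zero_le R') hR'R'',
      Finset.sum_Ioc_consecutive _ (Nat.zero_le R'') hR''N]
  have hsplit_q : ∑ i ∈ Finset.Ioc 0 N, q i
      = (∑ i ∈ Finset.Ioc 0 R', q i) + (∑ i ∈ Finset.Ioc R' R'', q i)
        + ∑ i ∈ Finset.Ioc R'' N, q i := by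
    rw [Finset.sum_Ioc_consecutive _ (Nat.zero_le R') hR'R'',
      Finset.sum_Ioc_consecutive _ (Nat.zero_le R'') hR''N]
  have hsplit_M : ∑ i ∈ Finset.Ioc 0 R, M i
      = (∑ i ∈ Finset.Ioc 0 R', M i) + ∑ i ∈ Finset.Ioc R' R, M i := by
    rw [Finset.sum_Ioc_consecutive _ (Nat.zero_le R') hR'R.le]
  have hmidM : ∑ i ∈ Finset.Ioc R' R, M i = ((R : ℝ) - (R' : ℝ)) * M R := by
    rw [Finset.sum_congr rfl (fun i hi => hmid i (Finset.mem_Ioc.mp hi).1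
      ((Finset.mem_Ioc.mp hi).2.trans hRR''))]
    rw [Finset.sum_const, Nat.card_Ioc, nsmul_eq_mul, Nat.cast_sub hR'R.le]
  have hmidqM : ∑ i ∈ Finset.Ioc R' R'', q i * M i
      = M R * ∑ i ∈ Finset.Ioc R' R'', q i := by
    rw [Finset.mul_sum]
    refine Finset.sum_congr rfl (fun i hi => ?_)
    rw [hmid i (Finset.mem_Ioc.mp hi).1 (Finset.mem_Ioc.mp hi).2]; ring
  have eA : ∑ i ∈ Finset.Ioc 0 R', (1 - q i) * (M i - M R)
      = ((∑ i ∈ Finset.Ioc 0 R', M i) - (∑ i ∈ Finset.Ioc 0 R', q i * M i))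
        + (M R * (∑ i ∈ Finset.Ioc 0 R', q i) - (R' : ℝ) * M R) := by
    rw [Finset.sum_congr rfl (fun i (_ : i ∈ Finset.Ioc 0 R') =>
      (by ring : (1 - q i) * (M i - M R) = (M i - q i * M i) + (M R * q i - M R))),
      Finset.sum_add_distrib, Finset.sum_sub_distrib, Finset.sum_sub_distrib,
      Finset.sum_const, Nat.card_Ioc, ← Finset.mul_sum, nsmul_eq_mul]
    simp
  have eB : ∑ i ∈ Finset.Ioc R'' N, q i * (M R - M i)
      = M R * (∑ i ∈ Finset.Ioc R'' N, q i) - ∑ i ∈ Finset.Ioc R'' N, q i * M i := by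
    rw [Finset.sum_congr rfl (fun i (_ : i ∈ Finset.Ioc R'' N) =>
      (by ring : q i * (M R - M i) = M R * q i - q i * M i)),
      Finset.sum_sub_distrib, ← Finset.mul_sum]
  have key : ∑ i ∈ Finset.Ioc 0 R, M i
      = (∑ i ∈ Finset.Ioc 0 N, q i * M i)
        + (∑ i ∈ Finset.Ioc 0 R', (1 - q i) * (M i - M R))
        + (∑ i ∈ Finset.Ioc R'' N, q i * (M R - M i))
        + M R * ((R : ℝ) - ∑ i ∈ Finset.Ioc 0 N, q i) := by
    rw [hsplit_M, hmidM, hsplit_qM, hmidqM, hsplit_q, eA, eB]; ring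
  -- basic facts about q on the pieces
  have hqmem : ∀ i ∈ Finset.Ioc 0 R', 0 ≤ q i ∧ q i ≤ 1 := by
    intro i hi
    obtain ⟨hi1, hi2⟩ := Finset.mem_Ioc.mp hi
    exact (hq i hi1 (hi2.trans hR'N) : q i ∈ Set.Icc (0:ℝ) 1)
  have hqmem3 : ∀ i ∈ Finset.Ioc R'' N, 0 ≤ q i ∧ q i ≤ 1 := by
    intro i hi
    obtain ⟨hi1, hi2⟩ := Finset.mem_Ioc.mp hi
    exact (hq i (by omega) hi2 : q i ∈ Set.Icc (0:ℝ) 1)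
  have hApos : ∀ i ∈ Finset.Ioc 0 R', 0 ≤ (1 - q i) * (M i - M R) := by
    intro i hi
    obtain ⟨hi1, hi2⟩ := Finset.mem_Ioc.mp hi
    have hMi : M R < M i := (hkR' i hi1 (hi2.trans hR'N)).mpr hi2
    have := (hqmem i hi).2
    nlinarith
  have hBpos : ∀ i ∈ Finset.Ioc R'' N, 0 ≤ q i * (M R - M i) := by
    intro i hi
    obtain ⟨hi1, hi2⟩ := Finset.mem_Ioc.mp hi
    have hMi : M i < M R := hhigh i hi1 hi2
    have := (hqmem3 i hi).1
    nlinarith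
  have hA0 : 0 ≤ ∑ i ∈ Finset.Ioc 0 R', (1 - q i) * (M i - M R) :=
    Finset.sum_nonneg hApos
  have hB0 : 0 ≤ ∑ i ∈ Finset.Ioc R'' N, q i * (M R - M i) :=
    Finset.sum_nonneg hBpos
  have hC0 : 0 ≤ M R * ((R : ℝ) - ∑ i ∈ Finset.Ioc 0 N, q i) :=
    mul_nonneg hMR.le (by linarith)
  constructor
  · intro h
    have hAz : ∑ i ∈ Finset.Ioc 0 R', (1 - q i) * (M i - M R) = 0 := by linarith
    have hBz : ∑ i ∈ Finset.Ioc R'' N, q i * (M R - M i) = 0 := by linarith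
    have hCz : M R * ((R : ℝ) - ∑ i ∈ Finset.Ioc 0 N, q i) = 0 := by linarith
    have hAterm := (Finset.sum_eq_zero_iff_of_nonneg hApos).mp hAz
    have hBterm := (Finset.sum_eq_zero_iff_of_nonneg hBpos).mp hBz
    have hq1 : ∀ i ∈ Finset.Ioc 0 R', q i = 1 := by
      intro i hi
      obtain ⟨hi1, hi2⟩ := Finset.mem_Ioc.mp hi
      have hMi : M R < M i := (hkR' i hi1 (hi2.trans hR'N)).mpr hi2
      have := hAterm i hi
      rcases mul_eq_zero.mp this with h' | h'
      · linarith
      · linarith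
    have hq0 : ∀ i ∈ Finset.Ioc R'' N, q i = 0 := by
      intro i hi
      obtain ⟨hi1, hi2⟩ := Finset.mem_Ioc.mp hi
      have hMi : M i < M R := hhigh i hi1 hi2
      rcases mul_eq_zero.mp (hBterm i hi) with h' | h'
      · exact h'
      · linarith
    have hQ : ∑ i ∈ Finset.Ioc 0 N, q i = (R : ℝ) := by
      rcases mul_eq_zero.mp hCz with h' | h'
      · exact absurd h' (ne_of_gt hMR)
      · linarith
    refine ⟨?_, ?_, ?_⟩
    · intro k hk hlt
      obtain ⟨hk1, hkN⟩ := Finset.mem_Ioc.mp hk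
      exact hq1 k (Finset.mem_Ioc.mpr ⟨hk1, (hkR' k hk1 hkN).mp hlt⟩)
    · intro k hk hlt
      obtain ⟨hk1, hkN⟩ := Finset.mem_Ioc.mp hk
      have hkR'' : R'' < k := by
        by_contra hc
        exact absurd (hgeR'' k hk1 (not_lt.mp hc)) (not_le.mpr hlt)
      exact hq0 k (Finset.mem_Ioc.mpr ⟨hkR'', hkN⟩)
    · have hQ1 : ∑ i ∈ Finset.Ioc 0 R', q i = (R' : ℝ) := by
        rw [Finset.sum_congr rfl hq1, Finset.sum_const, Nat.card_Ioc]
        simp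
      have hQ3 : ∑ i ∈ Finset.Ioc R'' N, q i = 0 :=
        Finset.sum_eq_zero hq0
      rw [hsplit_q, hQ1, hQ3] at hQ
      linarith
  · rintro ⟨h1, h0, h2⟩
    have hq1 : ∀ i ∈ Finset.Ioc 0 R', q i = 1 := by
      intro i hi
      obtain ⟨hi1, hi2⟩ := Finset.mem_Ioc.mp hi
      exact h1 i (Finset.mem_Ioc.mpr ⟨hi1, hi2.trans hR'N⟩)
        ((hkR' i hi1 (hi2.trans hR'N)).mpr hi2)
    have hq0 : ∀ i ∈ Finset.Ioc R'' N, q i = 0 := by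
      intro i hi
      obtain ⟨hi1, hi2⟩ := Finset.mem_Ioc.mp hi
      exact h0 i (Finset.mem_Ioc.mpr ⟨by omega, hi2⟩) (hhigh i hi1 hi2)
    have hAz : ∑ i ∈ Finset.Ioc 0 R', (1 - q i) * (M i - M R) = 0 :=
      Finset.sum_eq_zero (fun i hi => by rw [hq1 i hi]; ring)
    have hBz : ∑ i ∈ Finset.Ioc R'' N, q i * (M R - M i) = 0 :=
      Finset.sum_eq_zero (fun i hi => by rw [hq0 i hi]; ring)
    have hQ1 : ∑ i ∈ Finset.Ioc 0 R', q i = (R' : ℝ) := by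
      rw [Finset.sum_congr rfl hq1, Finset.sum_const, Nat.card_Ioc]
      simp
    have hQ3 : ∑ i ∈ Finset.Ioc R'' N, q i = 0 := Finset.sum_eq_zero hq0
    have hQ : ∑ i ∈ Finset.Ioc 0 N, q i = (R : ℝ) := by
      rw [hsplit_q, hQ1, hQ3, h2]; ring
    rw [key, hAz, hBz, hQ]; ring
end
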